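/- arXiv:2110.07851 — 4 statements merged into one kernel-verified Lean document; each statement's English description precedes it below -/
import Mathlib

section
/- Under model y = Xβ + ε (E(ε)=0, Var(ε)=σ²I) and stochastic restriction r = Rβ + e with E(e)=0, Var(e)=σ²Ω, e independent of ε, the stochastic restricted Liu estimator β̂_SRL = β̂_LT1 + vS⁻¹Rᵀ(Ω + vRS⁻¹Rᵀ)⁻¹(r − R β̂_LT1), where β̂_LT1 = (S+I)⁻¹(S+dI)β̂_LS, satisfies E(β̂_SRL) = β + A(F_d − I)Sβ with A = (S + vRᵀΩ⁻¹R)⁻¹ and F_d = (S+I)⁻¹(S+dI). -/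
open MeasureTheory Matrix

/-- Componentwise mean of a random vector. -/
noncomputable def vmean {Ω : Type*} [MeasurableSpace Ω] (μ : Measure Ω) {n : Type*}
    (f : Ω → n → ℝ) : n → ℝ := fun i => ∫ ω, f ω i ∂μ

/-- Covariance matrix of a random vector. -/
noncomputable def vcov {Ω : Type*} [MeasurableSpace Ω] (μ : Measure Ω) {n : Type*}
    (f : Ω → n → ℝ) : Matrix n n ℝ :=
  Matrix.of fun i j => ∫ ω, (f ω i - vmean μ f i) * (f ω j - vmean μ f j) ∂μ


lemma vmean_affine {Ω : Type*} [MeasurableSpace Ω] (μ : Measure Ω) [IsProbabilityMeasure μ]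
    {n m k : ℕ} (c : Fin n → ℝ) (M : Matrix (Fin n) (Fin m) ℝ) (K : Matrix (Fin n) (Fin k) ℝ)
    (ε : Ω → Fin m → ℝ) (e : Ω → Fin k → ℝ)
    (hε : ∀ i, Integrable (fun ω => ε ω i) μ) (he : ∀ i, Integrable (fun ω => e ω i) μ) :
    vmean μ (fun ω => c + M.mulVec (ε ω) + K.mulVec (e ω))
      = c + M.mulVec (vmean μ ε) + K.mulVec (vmean μ e) := by
  funext i
  simp only [vmean, Pi.add_apply, Matrix.mulVec, dotProduct]
  rw [integral_add, integral_add, integral_const]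
  · simp only [measure_univ, ENNReal.toReal_one, smul_eq_mul, one_mul]
    rw [integral_finset_sum, integral_finset_sum]
    · simp [integral_const_mul]
    · exact fun j _ => (he j).const_mul _
    · exact fun j _ => (hε j).const_mul _
  · exact integrable_const _
  · exact integrable_finset_sum _ (fun j _ => (hε j).const_mul _)
  · exact (integrable_const _).add (integrable_finset_sum _ (fun j _ => (hε j).const_mul _))
  · exact integrable_finset_sum _ (fun j _ => (he j).const_mul _)

lemma comm_inv {n : ℕ} (P Q : Matrix (Fin n) (Fin n) ℝ) (hP : IsUnit P.det)
    (h : P * Q = Q * P) : P⁻¹ * Q = Q * P⁻¹ := by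
  have h1 := Matrix.nonsing_inv_mul P hP
  have h2 := Matrix.mul_nonsing_inv P hP
  calc P⁻¹ * Q = P⁻¹ * Q * (P * P⁻¹) := by rw [h2, mul_one]
    _ = P⁻¹ * (Q * P) * P⁻¹ := by simp only [mul_assoc]
    _ = P⁻¹ * (P * Q) * P⁻¹ := by rw [h]
    _ = (P⁻¹ * P) * (Q * P⁻¹) := by simp only [mul_assoc]
    _ = Q * P⁻¹ := by rw [h1, one_mul]

theorem stmt8 {N p j : ℕ} {Ω : Type*} [MeasurableSpace Ω] (μ : Measure Ω) [IsProbabilityMeasure μ]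
    (X : Matrix (Fin N) (Fin p) ℝ) (R : Matrix (Fin j) (Fin p) ℝ)
    (Om : Matrix (Fin j) (Fin j) ℝ) (β : Fin p → ℝ) (σ v d : ℝ)
    (hv : 0 < v) (hOm : Om.PosDef)
    (ε : Ω → Fin N → ℝ) (e : Ω → Fin j → ℝ)
    (hεint : ∀ i, MemLp (fun ω => ε ω i) 2 μ) (heint : ∀ i, MemLp (fun ω => e ω i) 2 μ)
    (hεmean : vmean μ ε = 0) (hεcov : vcov μ ε = σ ^ 2 • (1 : Matrix (Fin N) (Fin N) ℝ))
    (hemean : vmean μ e = 0) (hecov : vcov μ e = σ ^ 2 • Om)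
    (hindep : ProbabilityTheory.IndepFun ε e μ)
    (S : Matrix (Fin p) (Fin p) ℝ) (hS : S = Xᵀ * X) (hSinv : IsUnit S.det)
    (hS1 : IsUnit (S + 1).det)
    (hAinv : IsUnit (S + v • (Rᵀ * Om⁻¹ * R)).det)
    (hBinv : IsUnit (Om + v • (R * S⁻¹ * Rᵀ)).det)
    (y : Ω → Fin N → ℝ) (hy : ∀ ω, y ω = X.mulVec β + ε ω)
    (r : Ω → Fin j → ℝ) (hr : ∀ ω, r ω = R.mulVec β + e ω)
    (βLS : Ω → Fin p → ℝ) (hβLS : ∀ ω, βLS ω = (S⁻¹ * Xᵀ).mulVec (y ω))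
    (Fd : Matrix (Fin p) (Fin p) ℝ)
    (hFd : Fd = (S + 1)⁻¹ * (S + d • (1 : Matrix (Fin p) (Fin p) ℝ)))
    (βLT1 : Ω → Fin p → ℝ) (hLT1 : ∀ ω, βLT1 ω = Fd.mulVec (βLS ω))
    (βSRL : Ω → Fin p → ℝ)
    (hSRL : ∀ ω, βSRL ω = βLT1 ω +
      v • (S⁻¹ * Rᵀ * (Om + v • (R * S⁻¹ * Rᵀ))⁻¹).mulVec (r ω - R.mulVec (βLT1 ω)))
    (A : Matrix (Fin p) (Fin p) ℝ) (hA : A = (S + v • (Rᵀ * Om⁻¹ * R))⁻¹) :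
    vmean μ βSRL = β + (A * (Fd - 1) * S).mulVec β := by
  have hv0 : v ≠ 0 := ne_of_gt hv
  have hOmd : IsUnit Om.det := isUnit_iff_ne_zero.mpr (ne_of_gt hOm.det_pos)
  set B : Matrix (Fin j) (Fin j) ℝ := Om + v • (R * S⁻¹ * Rᵀ) with hBdef
  set G : Matrix (Fin p) (Fin j) ℝ := S⁻¹ * Rᵀ * B⁻¹ with hGdef
  have hiS : S⁻¹ * S = 1 := Matrix.nonsing_inv_mul S hSinv
  have hSi : S * S⁻¹ = 1 := Matrix.mul_nonsing_inv S hSinv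
  -- Woodbury: A = S⁻¹ - v • (G * R * S⁻¹)
  have hAeq : A = S⁻¹ - v • (G * R * S⁻¹) := by
    haveI : Invertible v := invertibleOfNonzero hv0
    have hCinv : (v • Om⁻¹)⁻¹ = v⁻¹ • Om := by
      apply Matrix.inv_eq_right_inv
      rw [smul_mul_assoc, Matrix.mul_smul, smul_smul, mul_inv_cancel₀ hv0, one_smul,
        Matrix.nonsing_inv_mul Om hOmd]
    have hACB : (v • Om⁻¹)⁻¹ + R * S⁻¹ * Rᵀ = v⁻¹ • B := by
      rw [hCinv, hBdef, smul_add, smul_smul, inv_mul_cancel₀ hv0, one_smul]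
    have hACU : IsUnit ((v • Om⁻¹)⁻¹ + R * S⁻¹ * Rᵀ).det := by
      rw [hACB, Matrix.det_smul]
      exact (IsUnit.pow _ (isUnit_iff_ne_zero.mpr (inv_ne_zero hv0))).mul hBinv
    have hCU : IsUnit (v • Om⁻¹).det := by
      rw [Matrix.det_smul]
      exact (IsUnit.pow _ (isUnit_iff_ne_zero.mpr hv0)).mul
        (Matrix.isUnit_nonsing_inv_det Om hOmd)
    have h1 : S + v • (Rᵀ * Om⁻¹ * R) = S + Rᵀ * (v • Om⁻¹) * R := by
      rw [Matrix.mul_smul, Matrix.smul_mul]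
    have hvB : ((v • Om⁻¹)⁻¹ + R * S⁻¹ * Rᵀ)⁻¹ = v • B⁻¹ := by
      rw [hACB]
      apply Matrix.inv_eq_right_inv
      rw [smul_mul_assoc, Matrix.mul_smul, smul_smul, inv_mul_cancel₀ hv0, one_smul,
        Matrix.mul_nonsing_inv _ hBinv]
    rw [hA, h1, Matrix.add_mul_mul_inv_eq_sub S Rᵀ (v • Om⁻¹) R
      ((Matrix.isUnit_iff_isUnit_det S).mpr hSinv) ((Matrix.isUnit_iff_isUnit_det _).mpr hCU)
      ((Matrix.isUnit_iff_isUnit_det _).mpr hACU), hvB, hGdef]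
    congr 1
    simp only [Matrix.mul_smul, Matrix.smul_mul, Matrix.mul_assoc]
  -- decomposition of βSRL
  set c : Fin p → ℝ := (Fd + v • (G * (R - R * Fd))).mulVec β with hc
  set M : Matrix (Fin p) (Fin N) ℝ := (Fd - v • (G * (R * Fd))) * (S⁻¹ * Xᵀ) with hM
  set K : Matrix (Fin p) (Fin j) ℝ := v • G with hK
  have hβ : ∀ ω, βLS ω = β + (S⁻¹ * Xᵀ).mulVec (ε ω) := by
    intro ω
    rw [hβLS, hy, Matrix.mulVec_add, Matrix.mulVec_mulVec, Matrix.mul_assoc, ← hS, hiS,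
      Matrix.one_mulVec]
  have key : ∀ ω, βSRL ω = c + M.mulVec (ε ω) + K.mulVec (e ω) := by
    intro ω
    rw [hSRL, hLT1, hβ, hr, hc, hM, hK]
    simp only [Matrix.mulVec_add, Matrix.mulVec_sub, Matrix.add_mulVec, Matrix.sub_mulVec,
      Matrix.smul_mulVec, ← Matrix.mulVec_mulVec, smul_sub, smul_add]
    module
  have hβSRL : βSRL = fun ω => c + M.mulVec (ε ω) + K.mulVec (e ω) := funext key
  rw [hβSRL, vmean_affine μ c M K ε e
      (fun i => (hεint i).integrable (by norm_num))
      (fun i => (heint i).integrable (by norm_num)),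
    hεmean, hemean, Matrix.mulVec_zero, Matrix.mulVec_zero, add_zero, add_zero, hc]
  -- matrix identity
  have hcS1 : S * (S + 1) = (S + 1) * S := by rw [mul_add, add_mul, mul_one, one_mul]
  have hcomm : S * Fd = Fd * S := by
    rw [hFd, ← mul_assoc, ← comm_inv (S + 1) S hS1 hcS1.symm, mul_assoc, mul_assoc]
    congr 1
    rw [mul_add, add_mul, mul_smul_comm, smul_mul_assoc, mul_one, one_mul]
  have hcomm' : S⁻¹ * (Fd - 1) = (Fd - 1) * S⁻¹ := by
    apply comm_inv S (Fd - 1) hSinv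
    rw [mul_sub, sub_mul, hcomm, mul_one, one_mul]
  have hmid : (Fd - 1) * S⁻¹ * S = Fd - 1 := by rw [mul_assoc, hiS, mul_one]
  have h2 : G * R * S⁻¹ * (Fd - 1) * S = G * R * (Fd - 1) := by
    rw [mul_assoc (G * R) S⁻¹ (Fd - 1), hcomm', ← mul_assoc, mul_assoc (G * R * (Fd - 1)) S⁻¹ S,
      hiS, mul_one]
  have hfinal : Fd + v • (G * (R - R * Fd)) = 1 + A * (Fd - 1) * S := by
    rw [hAeq, Matrix.sub_mul, Matrix.sub_mul, hcomm', hmid, Matrix.smul_mul, Matrix.smul_mul, h2]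
    simp only [Matrix.mul_sub, Matrix.mul_one, smul_sub, ← Matrix.mul_assoc]
    abel
  rw [hfinal, Matrix.add_mulVec, Matrix.one_mulVec]
end

section
/- Under the same assumptions, the covariance of the stochastic restricted Liu estimator is Var(β̂_SRL) = σ²A(F_d S F_dᵀ + v²RᵀΩ⁻¹R)A, with A = (S + vRᵀΩ⁻¹R)⁻¹ and F_d = (S+I)⁻¹(S+dI). -/
open MeasureTheory Matrix

open ProbabilityTheory

section Prob
variable {Ωs : Type*} [MeasurableSpace Ωs] {μ : Measure Ωs} [IsProbabilityMeasure μ]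

lemma l2_int {f : Ωs → ℝ} (h : MemLp f 2 μ) : Integrable f μ := h.integrable one_le_two

lemma l2_mul {f g : Ωs → ℝ} (hf : MemLp f 2 μ) (hg : MemLp g 2 μ) :
    Integrable (fun ω => f ω * g ω) μ := by
  refine (hf.integrable_sq.add hg.integrable_sq).mono'
    (hf.aestronglyMeasurable.mul hg.aestronglyMeasurable)
    (Filter.Eventually.of_forall fun ω => ?_)
  simp only [Real.norm_eq_abs, Pi.add_apply]
  nlinarith [abs_mul (f ω) (g ω), sq_abs (f ω), sq_abs (g ω), sq_nonneg (|f ω| - |g ω|),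
    abs_nonneg (f ω * g ω)]

lemma vcov_affine {n m k : Type*} [Fintype m] [Fintype k]
    (M : Matrix n m ℝ) (Nm : Matrix n k ℝ) (c : n → ℝ)
    (ε : Ωs → m → ℝ) (e : Ωs → k → ℝ)
    (hε : ∀ i, MemLp (fun ω => ε ω i) 2 μ) (he : ∀ i, MemLp (fun ω => e ω i) 2 μ)
    (hεmean : vmean μ ε = 0) (hemean : vmean μ e = 0)
    (hindep : IndepFun ε e μ)
    (f : Ωs → n → ℝ) (hf : ∀ ω, f ω = c + M.mulVec (ε ω) + Nm.mulVec (e ω)) :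
    vcov μ f = M * vcov μ ε * Mᵀ + Nm * vcov μ e * Nmᵀ := by
  classical
  -- combined random vector
  set z : Ωs → m ⊕ k → ℝ := fun ω => Sum.elim (ε ω) (e ω) with hz
  set P : Matrix n (m ⊕ k) ℝ := Matrix.of fun i => Sum.elim (M i) (Nm i) with hP
  have hz2 : ∀ a, MemLp (fun ω => z ω a) 2 μ := by rintro (a | a); exacts [hε a, he a]
  have hzmean : ∀ a, (∫ ω, z ω a ∂μ) = 0 := by
    rintro (a | a)
    · have := congrFun hεmean a; simpa [vmean, hz] using this
    · have := congrFun hemean a; simpa [vmean, hz] using this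
  have hcross : ∀ (a : m) (b : k), (∫ ω, ε ω a * e ω b ∂μ) = 0 := by
    intro a b
    have h1 : IndepFun (fun ω => ε ω a) (fun ω => e ω b) μ :=
      hindep.comp (measurable_pi_apply a) (measurable_pi_apply b)
    have h2 := h1.integral_mul_eq_mul_integral (hε a).aestronglyMeasurable (he b).aestronglyMeasurable
    have ha := hzmean (Sum.inl a); have hb := hzmean (Sum.inr b)
    simp only [hz, Sum.elim_inl, Sum.elim_inr] at ha hb
    simpa [Pi.mul_apply, ha, hb] using h2
  set C : Matrix (m ⊕ k) (m ⊕ k) ℝ := Matrix.fromBlocks (vcov μ ε) 0 0 (vcov μ e) with hC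
  have hCint : ∀ a b, (∫ ω, z ω a * z ω b ∂μ) = C a b := by
    rintro (a | a) (b | b)
    · have hv : vcov μ ε a b = ∫ ω, ε ω a * ε ω b ∂μ := by
        simp [vcov, hεmean]
      simp [hz, hC, Matrix.fromBlocks, hv]
    · simpa [hz, hC, Matrix.fromBlocks] using hcross a b
    · have := hcross b a
      simp only [hz, hC, Sum.elim_inl, Sum.elim_inr, Matrix.fromBlocks]
      simpa [mul_comm] using this
    · have hv : vcov μ e a b = ∫ ω, e ω a * e ω b ∂μ := by
        simp [vcov, hemean]
      simp [hz, hC, Matrix.fromBlocks, hv]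
  -- mean of f is c
  have hfc : ∀ ω i, f ω i = c i + ∑ a, P i a * z ω a := by
    intro ω i
    rw [hf ω]
    simp [Matrix.mulVec, dotProduct, hP, Fintype.sum_sum_type, hz, add_assoc]
  have hmean : vmean μ f = c := by
    funext i
    have : (∫ ω, f ω i ∂μ) = ∫ ω, c i + ∑ a, P i a * z ω a ∂μ := by
      congr 1; funext ω; exact hfc ω i
    rw [vmean]; rw [this]
    rw [integral_add (integrable_const _) (by
      exact integrable_finset_sum _ fun a _ => (l2_int (hz2 a)).const_mul _)]
    rw [integral_finset_sum _ fun a _ => (l2_int (hz2 a)).const_mul _]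
    simp [integral_const_mul, hzmean]
  -- covariance entries
  funext i jj
  show (∫ ω, (f ω i - vmean μ f i) * (f ω jj - vmean μ f jj) ∂μ) = _
  have hexp : ∀ ω, (f ω i - vmean μ f i) * (f ω jj - vmean μ f jj)
      = ∑ a, ∑ b, P i a * P jj b * (z ω a * z ω b) := by
    intro ω
    rw [hmean, hfc ω i, hfc ω jj]
    ring_nf
    rw [Finset.sum_mul_sum]
    exact Finset.sum_congr rfl fun a _ => Finset.sum_congr rfl fun b _ => by ring
  have hint2 : ∀ a b, Integrable (fun ω => P i a * P jj b * (z ω a * z ω b)) μ :=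
    fun a b => (l2_mul (hz2 a) (hz2 b)).const_mul _
  calc (∫ ω, (f ω i - vmean μ f i) * (f ω jj - vmean μ f jj) ∂μ)
      = ∫ ω, ∑ a, ∑ b, P i a * P jj b * (z ω a * z ω b) ∂μ := by
        congr 1; funext ω; exact hexp ω
    _ = ∑ a, ∑ b, P i a * P jj b * C a b := by
        rw [integral_finset_sum _ fun a _ => integrable_finset_sum _ fun b _ => hint2 a b]
        refine Finset.sum_congr rfl fun a _ => ?_
        rw [integral_finset_sum _ fun b _ => hint2 a b]
        exact Finset.sum_congr rfl fun b _ => by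
          rw [integral_const_mul, hCint a b]
    _ = (M * vcov μ ε * Mᵀ + Nm * vcov μ e * Nmᵀ) i jj := by
        have tri1 : (M * vcov μ ε * Mᵀ) i jj = ∑ a, ∑ b, M i a * M jj b * vcov μ ε a b := by
          simp only [Matrix.mul_apply, Matrix.transpose_apply, Finset.sum_mul]
          rw [Finset.sum_comm]
          exact Finset.sum_congr rfl fun a _ => Finset.sum_congr rfl fun b _ => by ring
        have tri2 : (Nm * vcov μ e * Nmᵀ) i jj = ∑ a, ∑ b, Nm i a * Nm jj b * vcov μ e a b := by
          simp only [Matrix.mul_apply, Matrix.transpose_apply, Finset.sum_mul]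
          rw [Finset.sum_comm]
          exact Finset.sum_congr rfl fun a _ => Finset.sum_congr rfl fun b _ => by ring
        rw [Matrix.add_apply, tri1, tri2, Fintype.sum_sum_type]
        simp only [Fintype.sum_sum_type, hP, hC, Matrix.of_apply, Sum.elim_inl, Sum.elim_inr,
          Matrix.fromBlocks_apply₁₁, Matrix.fromBlocks_apply₁₂, Matrix.fromBlocks_apply₂₁,
          Matrix.fromBlocks_apply₂₂, Matrix.zero_apply, mul_zero, Finset.sum_const_zero,
          add_zero, zero_add]

end Prob

theorem stmt9 {N p j : ℕ} {Ω : Type*} [MeasurableSpace Ω] (μ : Measure Ω) [IsProbabilityMeasure μ]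
    (X : Matrix (Fin N) (Fin p) ℝ) (R : Matrix (Fin j) (Fin p) ℝ)
    (Om : Matrix (Fin j) (Fin j) ℝ) (β : Fin p → ℝ) (σ v d : ℝ)
    (hv : 0 < v) (hOm : Om.PosDef)
    (ε : Ω → Fin N → ℝ) (e : Ω → Fin j → ℝ)
    (hεint : ∀ i, MemLp (fun ω => ε ω i) 2 μ) (heint : ∀ i, MemLp (fun ω => e ω i) 2 μ)
    (hεmean : vmean μ ε = 0) (hεcov : vcov μ ε = σ ^ 2 • (1 : Matrix (Fin N) (Fin N) ℝ))
    (hemean : vmean μ e = 0) (hecov : vcov μ e = σ ^ 2 • Om)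
    (hindep : ProbabilityTheory.IndepFun ε e μ)
    (S : Matrix (Fin p) (Fin p) ℝ) (hS : S = Xᵀ * X) (hSinv : IsUnit S.det)
    (hS1 : IsUnit (S + 1).det)
    (hAinv : IsUnit (S + v • (Rᵀ * Om⁻¹ * R)).det)
    (hBinv : IsUnit (Om + v • (R * S⁻¹ * Rᵀ)).det)
    (y : Ω → Fin N → ℝ) (hy : ∀ ω, y ω = X.mulVec β + ε ω)
    (r : Ω → Fin j → ℝ) (hr : ∀ ω, r ω = R.mulVec β + e ω)
    (βLS : Ω → Fin p → ℝ) (hβLS : ∀ ω, βLS ω = (S⁻¹ * Xᵀ).mulVec (y ω))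
    (Fd : Matrix (Fin p) (Fin p) ℝ)
    (hFd : Fd = (S + 1)⁻¹ * (S + d • (1 : Matrix (Fin p) (Fin p) ℝ)))
    (βLT1 : Ω → Fin p → ℝ) (hLT1 : ∀ ω, βLT1 ω = Fd.mulVec (βLS ω))
    (βSRL : Ω → Fin p → ℝ)
    (hSRL : ∀ ω, βSRL ω = βLT1 ω +
      v • (S⁻¹ * Rᵀ * (Om + v • (R * S⁻¹ * Rᵀ))⁻¹).mulVec (r ω - R.mulVec (βLT1 ω)))
    (A : Matrix (Fin p) (Fin p) ℝ) (hA : A = (S + v • (Rᵀ * Om⁻¹ * R))⁻¹) :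
    vcov μ βSRL = σ ^ 2 • (A * (Fd * S * Fdᵀ + v ^ 2 • (Rᵀ * Om⁻¹ * R)) * A) := by
  have hOmdet : IsUnit Om.det := isUnit_iff_ne_zero.2 (ne_of_gt hOm.det_pos)
  set B := Om + v • (R * S⁻¹ * Rᵀ) with hB
  set G := S⁻¹ * Rᵀ * B⁻¹ with hG
  -- symmetry facts
  have hST : Sᵀ = S := by rw [hS]; simp [Matrix.transpose_mul]
  have hOmT : Omᵀ = Om := hOm.1.eq
  have hOmiT : Om⁻¹ᵀ = Om⁻¹ := by rw [Matrix.transpose_nonsing_inv, hOmT]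
  have hTT : (Rᵀ * Om⁻¹ * R)ᵀ = Rᵀ * Om⁻¹ * R := by
    simp [Matrix.transpose_mul, hOmiT, Matrix.mul_assoc]
  have hAT : Aᵀ = A := by
    rw [hA, Matrix.transpose_nonsing_inv]
    congr 1
    simp [Matrix.transpose_add, hST, Matrix.transpose_smul, hTT]
  -- inverse facts
  have hSS : S⁻¹ * S = 1 := Matrix.nonsing_inv_mul S hSinv
  have hSS' : S * S⁻¹ = 1 := Matrix.mul_nonsing_inv S hSinv
  have hAone : A * (S + v • (Rᵀ * Om⁻¹ * R)) = 1 := by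
    rw [hA]; exact Matrix.nonsing_inv_mul _ hAinv
  have hOmOm : Om⁻¹ * Om = 1 := Matrix.nonsing_inv_mul Om hOmdet
  -- push-through identity: G = A * Rᵀ * Om⁻¹
  have hGA : G = A * Rᵀ * Om⁻¹ := by
    have key : (A * Rᵀ * Om⁻¹) * B = S⁻¹ * Rᵀ := by
      have expand : (A * Rᵀ * Om⁻¹) * B
          = A * Rᵀ + v • (A * (Rᵀ * Om⁻¹ * R) * (S⁻¹ * Rᵀ)) := by
        rw [hB, Matrix.mul_add, Matrix.mul_smul]
        congr 1
        · rw [Matrix.mul_assoc (A * Rᵀ), hOmOm, Matrix.mul_one]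
        · congr 1; simp [Matrix.mul_assoc]
      have expand2 : S⁻¹ * Rᵀ
          = A * Rᵀ + v • (A * (Rᵀ * Om⁻¹ * R) * (S⁻¹ * Rᵀ)) := by
        calc S⁻¹ * Rᵀ = A * (S + v • (Rᵀ * Om⁻¹ * R)) * (S⁻¹ * Rᵀ) := by
              rw [hAone, Matrix.one_mul]
          _ = A * S * (S⁻¹ * Rᵀ) + v • (A * (Rᵀ * Om⁻¹ * R) * (S⁻¹ * Rᵀ)) := by
              rw [Matrix.mul_add, Matrix.add_mul, Matrix.mul_smul, Matrix.smul_mul]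
          _ = A * Rᵀ + v • (A * (Rᵀ * Om⁻¹ * R) * (S⁻¹ * Rᵀ)) := by
              congr 1
              rw [Matrix.mul_assoc A S, ← Matrix.mul_assoc S, hSS', Matrix.one_mul]
      rw [expand, ← expand2]
    calc G = (A * Rᵀ * Om⁻¹) * B * B⁻¹ := by
            rw [key, hG]
      _ = A * Rᵀ * Om⁻¹ := by
            rw [Matrix.mul_assoc, Matrix.mul_nonsing_inv B hBinv, Matrix.mul_one]
  -- 1 - v G R = A S
  have hMAS : (1 : Matrix (Fin p) (Fin p) ℝ) - v • (G * R) = A * S := by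
    have h4 : A * (S + v • (Rᵀ * Om⁻¹ * R)) = A * S + v • (G * R) := by
      rw [Matrix.mul_add, Matrix.mul_smul, hGA]
      congr 2
      simp [Matrix.mul_assoc]
    rw [← hAone, h4]
    abel
  -- Fd commutes with S
  have hcomm : S * (S + 1)⁻¹ = (S + 1)⁻¹ * S := by
    calc S * (S + 1)⁻¹ = ((S + 1)⁻¹ * (S + 1)) * (S * (S + 1)⁻¹) := by
          rw [Matrix.nonsing_inv_mul _ hS1, Matrix.one_mul]
      _ = (S + 1)⁻¹ * ((S + 1) * S) * (S + 1)⁻¹ := by simp [Matrix.mul_assoc]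
      _ = (S + 1)⁻¹ * (S * (S + 1)) * (S + 1)⁻¹ := by
          rw [show (S + 1) * S = S * (S + 1) by noncomm_ring]
      _ = (S + 1)⁻¹ * S * ((S + 1) * (S + 1)⁻¹) := by simp [Matrix.mul_assoc]
      _ = (S + 1)⁻¹ * S := by rw [Matrix.mul_nonsing_inv _ hS1, Matrix.mul_one]
  have hFdS : S * Fd = Fd * S := by
    have h2 : (S + d • (1 : Matrix (Fin p) (Fin p) ℝ)) * S
        = S * (S + d • (1 : Matrix (Fin p) (Fin p) ℝ)) := by
      rw [Matrix.add_mul, Matrix.mul_add, Matrix.smul_mul, Matrix.mul_smul,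
        Matrix.one_mul, Matrix.mul_one]
    calc S * Fd = (S * (S + 1)⁻¹) * (S + d • 1) := by rw [hFd, Matrix.mul_assoc]
      _ = (S + 1)⁻¹ * (S * (S + d • 1)) := by rw [hcomm, Matrix.mul_assoc]
      _ = (S + 1)⁻¹ * ((S + d • 1) * S) := by rw [h2]
      _ = Fd * S := by rw [hFd, Matrix.mul_assoc]
  -- the affine form of βSRL
  set Mm : Matrix (Fin p) (Fin N) ℝ := (1 - v • (G * R)) * (Fd * (S⁻¹ * Xᵀ)) with hMm
  set Nmm : Matrix (Fin p) (Fin j) ℝ := v • G with hNmm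
  set cvec : Fin p → ℝ := (((1 - v • (G * R)) * Fd + v • (G * R))).mulVec β with hcvec
  have hβLS' : ∀ ω, βLS ω = β + (S⁻¹ * Xᵀ).mulVec (ε ω) := by
    intro ω
    rw [hβLS, hy, Matrix.mulVec_add]
    congr 1
    rw [Matrix.mulVec_mulVec, Matrix.mul_assoc, ← hS, hSS, Matrix.one_mulVec]
  have hform : ∀ ω, βSRL ω = cvec + Mm.mulVec (ε ω) + Nmm.mulVec (e ω) := by
    intro ω
    rw [hSRL, hr, hLT1, hβLS' ω]
    simp only [hMm, hNmm, hcvec, Matrix.mulVec_add, Matrix.add_mulVec, Matrix.sub_mulVec,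
      Matrix.smul_mulVec, Matrix.mulVec_sub, ← Matrix.mulVec_mulVec,
      Matrix.one_mulVec]
    module
  have := vcov_affine Mm Nmm cvec ε e hεint heint hεmean hemean hindep βSRL hform
  rw [this, hεcov, hecov]
  -- simplify Mm
  have hMm' : Mm = A * (Fd * Xᵀ) := by
    rw [hMm, hMAS, Matrix.mul_assoc, ← Matrix.mul_assoc S, hFdS, Matrix.mul_assoc Fd,
      ← Matrix.mul_assoc S, hSS', Matrix.one_mul]
  have hMT : Mmᵀ = X * Fdᵀ * A := by
    rw [hMm']
    simp [Matrix.transpose_mul, hAT, Matrix.mul_assoc]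
  have hNT : Nmmᵀ = v • (Om⁻¹ * (R * A)) := by
    rw [hNmm, Matrix.transpose_smul, hGA]
    simp [Matrix.transpose_mul, hAT, hOmiT, Matrix.mul_assoc]
  rw [hMT, hNT, hMm', hNmm, hGA]
  -- final matrix algebra
  have e1 : A * (Fd * Xᵀ) * (σ ^ 2 • (1 : Matrix (Fin N) (Fin N) ℝ)) * (X * Fdᵀ * A)
      = σ ^ 2 • (A * (Fd * S * Fdᵀ) * A) := by
    rw [Matrix.mul_smul, Matrix.mul_one, Matrix.smul_mul, hS]
    congr 1
    simp [Matrix.mul_assoc]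
  have hmid : A * Rᵀ * Om⁻¹ * Om * (Om⁻¹ * (R * A)) = A * (Rᵀ * Om⁻¹ * R) * A := by
    calc A * Rᵀ * Om⁻¹ * Om * (Om⁻¹ * (R * A))
        = A * Rᵀ * ((Om⁻¹ * Om) * Om⁻¹) * (R * A) := by simp [Matrix.mul_assoc]
      _ = A * (Rᵀ * Om⁻¹ * R) * A := by
          rw [hOmOm, Matrix.one_mul]; simp [Matrix.mul_assoc]
  have e2 : (v • (A * Rᵀ * Om⁻¹)) * (σ ^ 2 • Om) * (v • (Om⁻¹ * (R * A)))
      = σ ^ 2 • (v ^ 2 • (A * (Rᵀ * Om⁻¹ * R) * A)) := by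
    simp only [Matrix.smul_mul, Matrix.mul_smul, smul_smul]
    rw [hmid]
    congr 1
    ring
  rw [e1, e2, ← smul_add]
  congr 1
  rw [Matrix.mul_add, Matrix.add_mul, Matrix.mul_smul, Matrix.smul_mul]
end

section
/- The stochastic restricted ridge estimator β̂_SRR = β̂_R + vS⁻¹Rᵀ(Ω + vRS⁻¹Rᵀ)⁻¹(r − R β̂_R), with β̂_R = (I + kS⁻¹)⁻¹S⁻¹Xᵀy = W β̂_LS, admits the closed form β̂_SRR = (S + vRᵀΩ⁻¹R)⁻¹(W Xᵀy + vRᵀΩ⁻¹r), where W = (I + kS⁻¹)⁻¹. -/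
open Matrix

theorem stmt13 {N p j : ℕ} (X : Matrix (Fin N) (Fin p) ℝ) (y : Fin N → ℝ)
    (R : Matrix (Fin j) (Fin p) ℝ) (Om : Matrix (Fin j) (Fin j) ℝ) (r : Fin j → ℝ)
    (v k : ℝ) (hv : 0 < v) (hk : 0 < k)
    (S : Matrix (Fin p) (Fin p) ℝ) (hS : S = Xᵀ * X) (hSinv : IsUnit S.det)
    (hWinv : IsUnit (1 + k • S⁻¹).det) (hOm : IsUnit Om.det)
    (hAinv : IsUnit (S + v • (Rᵀ * Om⁻¹ * R)).det)
    (hBinv : IsUnit (Om + v • (R * S⁻¹ * Rᵀ)).det)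
    (W : Matrix (Fin p) (Fin p) ℝ) (hW : W = (1 + k • S⁻¹)⁻¹)
    (βLS : Fin p → ℝ) (hβLS : βLS = (S⁻¹ * Xᵀ).mulVec y)
    (βR : Fin p → ℝ) (hβR : βR = W.mulVec βLS)
    (βSRR : Fin p → ℝ)
    (hSRR : βSRR = βR +
      v • (S⁻¹ * Rᵀ * (Om + v • (R * S⁻¹ * Rᵀ))⁻¹).mulVec (r - R.mulVec βR)) :
    βSRR = ((S + v • (Rᵀ * Om⁻¹ * R))⁻¹).mulVec
      ((W * Xᵀ).mulVec y + v • (Rᵀ * Om⁻¹).mulVec r) := by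
  set A := S + v • (Rᵀ * Om⁻¹ * R) with hAdef
  set B := Om + v • (R * S⁻¹ * Rᵀ) with hBdef
  have hSS : S⁻¹ * S = 1 := nonsing_inv_mul _ hSinv
  have hSS' : S * S⁻¹ = 1 := mul_nonsing_inv _ hSinv
  have hW1 : W * (1 + k • S⁻¹) = 1 := by rw [hW]; exact nonsing_inv_mul _ hWinv
  have hW2 : (1 + k • S⁻¹) * W = 1 := by rw [hW]; exact mul_nonsing_inv _ hWinv
  have hOmOm : Om⁻¹ * Om = 1 := nonsing_inv_mul _ hOm
  have hB : B * B⁻¹ = 1 := mul_nonsing_inv _ hBinv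
  have hA : A⁻¹ * A = 1 := nonsing_inv_mul _ hAinv
  have hcommM : (1 + k • S⁻¹) * S = S * (1 + k • S⁻¹) := by
    rw [add_mul, mul_add, one_mul, mul_one, smul_mul_assoc, mul_smul_comm, hSS, hSS']
  have hcomm : S * W = W * S := by
    calc S * W = W * ((1 + k • S⁻¹) * S * W) := by
          rw [← mul_assoc, ← mul_assoc, hW1, one_mul]
      _ = W * (S * ((1 + k • S⁻¹) * W)) := by rw [hcommM, mul_assoc]
      _ = W * S := by rw [hW2, mul_one]
  have key1 : A * (S⁻¹ * Rᵀ * B⁻¹) = Rᵀ * Om⁻¹ := by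
    have h1 : A * (S⁻¹ * Rᵀ) = Rᵀ * Om⁻¹ * B := by
      rw [hAdef, hBdef, Matrix.add_mul, Matrix.mul_add, Matrix.smul_mul,
        Matrix.mul_smul, ← Matrix.mul_assoc S, hSS', Matrix.one_mul]
      congr 1
      · rw [Matrix.mul_assoc, hOmOm, Matrix.mul_one]
      · congr 1
        rw [Matrix.mul_assoc, Matrix.mul_assoc, Matrix.mul_assoc,
          Matrix.mul_assoc]
    calc A * (S⁻¹ * Rᵀ * B⁻¹) = (A * (S⁻¹ * Rᵀ)) * B⁻¹ := by
          simp only [Matrix.mul_assoc]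
      _ = Rᵀ * Om⁻¹ * (B * B⁻¹) := by rw [h1, Matrix.mul_assoc]
      _ = Rᵀ * Om⁻¹ := by rw [hB, Matrix.mul_one]
  have key2 : S.mulVec βR = (W * Xᵀ).mulVec y := by
    rw [hβR, hβLS, mulVec_mulVec, mulVec_mulVec]
    congr 1
    rw [← Matrix.mul_assoc, hcomm]
    simp only [Matrix.mul_assoc]
    rw [← Matrix.mul_assoc S, hSS', Matrix.one_mul]
  have hAβR : A.mulVec βR
      = (W * Xᵀ).mulVec y + v • (Rᵀ * Om⁻¹).mulVec (R.mulVec βR) := by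
    rw [hAdef, add_mulVec, key2, smul_mulVec, mulVec_mulVec]
  have main : A.mulVec βSRR = (W * Xᵀ).mulVec y + v • (Rᵀ * Om⁻¹).mulVec r := by
    rw [hSRR, mulVec_add, mulVec_smul, mulVec_mulVec, key1, hAβR,
      mulVec_sub, smul_sub]
    abel
  calc βSRR = (A⁻¹ * A).mulVec βSRR := by rw [hA, one_mulVec]
    _ = A⁻¹.mulVec (A.mulVec βSRR) := by rw [← mulVec_mulVec]
    _ = _ := by rw [main]
end

section
/- Under y = Xβ + ε (E(ε)=0, Var(ε)=σ²I) and r = Rβ + e (E(e)=0, Var(e)=σ²Ω, e independent of ε), the stochastic restricted ridge estimator β̂_SRR satisfies E(β̂_SRR) = β + A(W − I)Sβ and Var(β̂_SRR) = σ²A(WSWᵀ + v²RᵀΩ⁻¹R)A, where A = (S + vRᵀΩ⁻¹R)⁻¹ and W = (I + kS⁻¹)⁻¹. -/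
open MeasureTheory Matrix

lemma l2_mul_integrable {Ω : Type*} [MeasurableSpace Ω] {μ : Measure Ω} {f g : Ω → ℝ}
    (hf : MemLp f 2 μ) (hg : MemLp g 2 μ) : Integrable (fun ω => f ω * g ω) μ := by
  have h : MemLp (f • g) 1 μ :=
    by haveI : ENNReal.HolderTriple 2 2 1 := ⟨by simp [ENNReal.inv_two_add_inv_two]⟩; exact hg.smul hf
  exact memLp_one_iff_integrable.mp h

open ProbabilityTheory in
lemma affine_mean_cov {Ω : Type*} [MeasurableSpace Ω] (μ : Measure Ω) [IsProbabilityMeasure μ]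
    {N j p : ℕ} (M : Matrix (Fin p) (Fin N) ℝ) (M' : Matrix (Fin p) (Fin j) ℝ) (c : Fin p → ℝ)
    (ε : Ω → Fin N → ℝ) (e : Ω → Fin j → ℝ)
    (hεint : ∀ i, MemLp (fun ω => ε ω i) 2 μ) (heint : ∀ i, MemLp (fun ω => e ω i) 2 μ)
    (hεmean : vmean μ ε = 0) (hemean : vmean μ e = 0)
    (hindep : IndepFun ε e μ)
    (f : Ω → Fin p → ℝ) (hf : ∀ ω, f ω = c + M.mulVec (ε ω) + M'.mulVec (e ω)) :
    vmean μ f = c ∧ vcov μ f = M * vcov μ ε * Mᵀ + M' * vcov μ e * M'ᵀ := by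
  have hεi : ∀ l, Integrable (fun ω => ε ω l) μ := fun l => (hεint l).integrable one_le_two
  have hei : ∀ l, Integrable (fun ω => e ω l) μ := fun l => (heint l).integrable one_le_two
  have hεm : ∀ l, ∫ ω, ε ω l ∂μ = 0 := fun l => congrFun hεmean l
  have hem : ∀ l, ∫ ω, e ω l ∂μ = 0 := fun l => congrFun hemean l
  have hfc : ∀ ω i, f ω i = c i + ((∑ l, M i l * ε ω l) + ∑ m, M' i m * e ω m) := by
    intro ω i
    rw [hf ω]
    simp [Matrix.mulVec, dotProduct, add_assoc]
  have hintu : ∀ (i : Fin p), Integrable (fun ω => ∑ l, M i l * ε ω l) μ :=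
    fun i => integrable_finset_sum _ (fun l _ => (hεi l).const_mul _)
  have hintw : ∀ (i : Fin p), Integrable (fun ω => ∑ m, M' i m * e ω m) μ :=
    fun i => integrable_finset_sum _ (fun m _ => (hei m).const_mul _)
  have humean : ∀ i, ∫ ω, (∑ l, M i l * ε ω l) ∂μ = 0 := by
    intro i
    rw [integral_finset_sum _ (fun l _ => (hεi l).const_mul _)]
    simp [integral_const_mul, hεm]
  have hwmean : ∀ i, ∫ ω, (∑ m, M' i m * e ω m) ∂μ = 0 := by
    intro i
    rw [integral_finset_sum _ (fun m _ => (hei m).const_mul _)]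
    simp [integral_const_mul, hem]
  have hmean : vmean μ f = c := by
    funext i
    show (∫ ω, f ω i ∂μ) = c i
    simp_rw [hfc]
    have hsum : Integrable (fun ω => (∑ l, M i l * ε ω l) + ∑ m, M' i m * e ω m) μ :=
      (hintu i).add (hintw i)
    rw [integral_add (integrable_const _) hsum, integral_add (hintu i) (hintw i),
      humean, hwmean]
    simp
  refine ⟨hmean, ?_⟩
  have hcent : ∀ ω i, f ω i - vmean μ f i = (∑ l, M i l * ε ω l) + ∑ m, M' i m * e ω m := by
    intro ω i; rw [hmean, hfc]; ring
  have hcross : ∀ (l : Fin N) (m : Fin j), ∫ ω, ε ω l * e ω m ∂μ = 0 := by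
    intro l m
    have h1 : IndepFun (fun ω => ε ω l) (fun ω => e ω m) μ :=
      hindep.comp (measurable_pi_apply l) (measurable_pi_apply m)
    have h2 := h1.integral_mul_eq_mul_integral (hεint l).1 (heint m).1
    rw [show ((fun ω => ε ω l) * fun ω => e ω m) = fun ω => ε ω l * e ω m from rfl] at h2
    rw [h2, hεm, hem, mul_zero]
  have hεεi : ∀ (a b : Fin N), Integrable (fun ω => ε ω a * ε ω b) μ :=
    fun a b => l2_mul_integrable (hεint a) (hεint b)
  have heei : ∀ (a b : Fin j), Integrable (fun ω => e ω a * e ω b) μ :=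
    fun a b => l2_mul_integrable (heint a) (heint b)
  have hεei : ∀ (a : Fin N) (b : Fin j), Integrable (fun ω => ε ω a * e ω b) μ :=
    fun a b => l2_mul_integrable (hεint a) (heint b)
  have hCε : ∀ a b, (vcov μ ε) a b = ∫ ω, ε ω a * ε ω b ∂μ := by
    intro a b; simp [vcov, hεmean]
  have hCe : ∀ a b, (vcov μ e) a b = ∫ ω, e ω a * e ω b ∂μ := by
    intro a b; simp [vcov, hemean]
  funext i j'
  show (∫ ω, (f ω i - vmean μ f i) * (f ω j' - vmean μ f j') ∂μ) = _
  simp_rw [hcent]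
  have expand : ∀ ω, ((∑ l, M i l * ε ω l) + ∑ m, M' i m * e ω m) *
      ((∑ l, M j' l * ε ω l) + ∑ m, M' j' m * e ω m)
      = ((∑ a, ∑ b, (M i a * M j' b) * (ε ω a * ε ω b))
        + (∑ a, ∑ b, (M i a * M' j' b) * (ε ω a * e ω b)))
        + ((∑ a : Fin j, ∑ b : Fin N, (M' i a * M j' b) * (ε ω b * e ω a))
        + (∑ a, ∑ b, (M' i a * M' j' b) * (e ω a * e ω b))) := by
    intro ω
    rw [add_mul, mul_add, mul_add, Finset.sum_mul_sum, Finset.sum_mul_sum,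
      Finset.sum_mul_sum, Finset.sum_mul_sum]
    congr 1
    · congr 1 <;>
        exact Finset.sum_congr rfl fun a _ => Finset.sum_congr rfl fun b _ => by ring
    · congr 1 <;>
        exact Finset.sum_congr rfl fun a _ => Finset.sum_congr rfl fun b _ => by ring
  simp_rw [expand]
  have i1 : Integrable (fun ω => ∑ a, ∑ b, (M i a * M j' b) * (ε ω a * ε ω b)) μ :=
    integrable_finset_sum _ fun a _ => integrable_finset_sum _ fun b _ => (hεεi a b).const_mul _
  have i2 : Integrable (fun ω => ∑ a, ∑ b, (M i a * M' j' b) * (ε ω a * e ω b)) μ :=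
    integrable_finset_sum _ fun a _ => integrable_finset_sum _ fun b _ => (hεei a b).const_mul _
  have i3 : Integrable (fun ω => ∑ a : Fin j, ∑ b : Fin N, (M' i a * M j' b) * (ε ω b * e ω a)) μ :=
    integrable_finset_sum _ fun a _ => integrable_finset_sum _ fun b _ => (hεei b a).const_mul _
  have i4 : Integrable (fun ω => ∑ a, ∑ b, (M' i a * M' j' b) * (e ω a * e ω b)) μ :=
    integrable_finset_sum _ fun a _ => integrable_finset_sum _ fun b _ => (heei a b).const_mul _
  have i12 : Integrable (fun ω => (∑ a, ∑ b, (M i a * M j' b) * (ε ω a * ε ω b))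
      + (∑ a, ∑ b, (M i a * M' j' b) * (ε ω a * e ω b))) μ := i1.add i2
  have i34 : Integrable (fun ω => (∑ a : Fin j, ∑ b : Fin N, (M' i a * M j' b) * (ε ω b * e ω a))
      + (∑ a, ∑ b, (M' i a * M' j' b) * (e ω a * e ω b))) μ := i3.add i4
  rw [integral_add i12 i34, integral_add i1 i2, integral_add i3 i4]
  have I1 : ∫ ω, (∑ a, ∑ b, (M i a * M j' b) * (ε ω a * ε ω b)) ∂μ
      = ∑ a, ∑ b, (M i a * M j' b) * (vcov μ ε) a b := by
    rw [integral_finset_sum _ fun a _ => integrable_finset_sum _ fun b _ => (hεεi a b).const_mul _]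
    refine Finset.sum_congr rfl fun a _ => ?_
    rw [integral_finset_sum _ fun b _ => (hεεi a b).const_mul _]
    exact Finset.sum_congr rfl fun b _ => by rw [integral_const_mul, hCε]
  have I2 : ∫ ω, (∑ a, ∑ b, (M i a * M' j' b) * (ε ω a * e ω b)) ∂μ = 0 := by
    rw [integral_finset_sum _ fun a _ => integrable_finset_sum _ fun b _ => (hεei a b).const_mul _]
    refine Finset.sum_eq_zero fun a _ => ?_
    rw [integral_finset_sum _ fun b _ => (hεei a b).const_mul _]
    refine Finset.sum_eq_zero fun b _ => ?_
    rw [integral_const_mul, hcross, mul_zero]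
  have I3 : ∫ ω, (∑ a : Fin j, ∑ b : Fin N, (M' i a * M j' b) * (ε ω b * e ω a)) ∂μ = 0 := by
    rw [integral_finset_sum _ fun a _ => integrable_finset_sum _ fun b _ => (hεei b a).const_mul _]
    refine Finset.sum_eq_zero fun a _ => ?_
    rw [integral_finset_sum _ fun b _ => (hεei b a).const_mul _]
    refine Finset.sum_eq_zero fun b _ => ?_
    rw [integral_const_mul, hcross, mul_zero]
  have I4 : ∫ ω, (∑ a, ∑ b, (M' i a * M' j' b) * (e ω a * e ω b)) ∂μ
      = ∑ a, ∑ b, (M' i a * M' j' b) * (vcov μ e) a b := by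
    rw [integral_finset_sum _ fun a _ => integrable_finset_sum _ fun b _ => (heei a b).const_mul _]
    refine Finset.sum_congr rfl fun a _ => ?_
    rw [integral_finset_sum _ fun b _ => (heei a b).const_mul _]
    exact Finset.sum_congr rfl fun b _ => by rw [integral_const_mul, hCe]
  rw [I1, I2, I3, I4, add_zero, zero_add]
  simp only [Matrix.add_apply, Matrix.mul_apply, Matrix.transpose_apply]
  congr 1
  · rw [Finset.sum_comm]
    refine Finset.sum_congr rfl fun b _ => ?_
    rw [Finset.sum_mul]
    exact Finset.sum_congr rfl fun a _ => by ring
  · rw [Finset.sum_comm]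
    refine Finset.sum_congr rfl fun b _ => ?_
    rw [Finset.sum_mul]
    exact Finset.sum_congr rfl fun a _ => by ring


theorem stmt14 {N p j : ℕ} {Ω : Type*} [MeasurableSpace Ω] (μ : Measure Ω) [IsProbabilityMeasure μ]
    (X : Matrix (Fin N) (Fin p) ℝ) (R : Matrix (Fin j) (Fin p) ℝ)
    (Om : Matrix (Fin j) (Fin j) ℝ) (β : Fin p → ℝ) (σ v k : ℝ)
    (hv : 0 < v) (hk : 0 < k) (hOm : Om.PosDef)
    (ε : Ω → Fin N → ℝ) (e : Ω → Fin j → ℝ)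
    (hεint : ∀ i, MemLp (fun ω => ε ω i) 2 μ) (heint : ∀ i, MemLp (fun ω => e ω i) 2 μ)
    (hεmean : vmean μ ε = 0) (hεcov : vcov μ ε = σ ^ 2 • (1 : Matrix (Fin N) (Fin N) ℝ))
    (hemean : vmean μ e = 0) (hecov : vcov μ e = σ ^ 2 • Om)
    (hindep : ProbabilityTheory.IndepFun ε e μ)
    (S : Matrix (Fin p) (Fin p) ℝ) (hS : S = Xᵀ * X) (hSinv : IsUnit S.det)
    (hWinv : IsUnit (1 + k • S⁻¹).det)
    (hAinv : IsUnit (S + v • (Rᵀ * Om⁻¹ * R)).det)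
    (hBinv : IsUnit (Om + v • (R * S⁻¹ * Rᵀ)).det)
    (y : Ω → Fin N → ℝ) (hy : ∀ ω, y ω = X.mulVec β + ε ω)
    (r : Ω → Fin j → ℝ) (hr : ∀ ω, r ω = R.mulVec β + e ω)
    (W : Matrix (Fin p) (Fin p) ℝ) (hW : W = (1 + k • S⁻¹)⁻¹)
    (βR : Ω → Fin p → ℝ) (hβR : ∀ ω, βR ω = (W * S⁻¹ * Xᵀ).mulVec (y ω))
    (βSRR : Ω → Fin p → ℝ)
    (hSRR : ∀ ω, βSRR ω = βR ω +
      v • (S⁻¹ * Rᵀ * (Om + v • (R * S⁻¹ * Rᵀ))⁻¹).mulVec (r ω - R.mulVec (βR ω)))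
    (A : Matrix (Fin p) (Fin p) ℝ) (hA : A = (S + v • (Rᵀ * Om⁻¹ * R))⁻¹) :
    vmean μ βSRR = β + (A * (W - 1) * S).mulVec β ∧
      vcov μ βSRR = σ ^ 2 • (A * (W * S * Wᵀ + v ^ 2 • (Rᵀ * Om⁻¹ * R)) * A) := by
  -- basic invertibility facts
  have hSmul : S * S⁻¹ = 1 := Matrix.mul_nonsing_inv S hSinv
  have hSmul' : S⁻¹ * S = 1 := Matrix.nonsing_inv_mul S hSinv
  have hOmdet : IsUnit Om.det := isUnit_iff_ne_zero.mpr hOm.det_pos.ne'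
  have hOmmul : Om * Om⁻¹ = 1 := Matrix.mul_nonsing_inv Om hOmdet
  have hOmmul' : Om⁻¹ * Om = 1 := Matrix.nonsing_inv_mul Om hOmdet
  have hBmul : (Om + v • (R * S⁻¹ * Rᵀ)) * (Om + v • (R * S⁻¹ * Rᵀ))⁻¹ = 1 :=
    Matrix.mul_nonsing_inv _ hBinv
  have hAE : A * (S + v • (Rᵀ * Om⁻¹ * R)) = 1 := by
    rw [hA]; exact Matrix.nonsing_inv_mul _ hAinv
  have hWmul : W * (1 + k • S⁻¹) = 1 := by rw [hW]; exact Matrix.nonsing_inv_mul _ hWinv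
  have hWmul' : (1 + k • S⁻¹) * W = 1 := by rw [hW]; exact Matrix.mul_nonsing_inv _ hWinv
  -- transposes
  have hST : Sᵀ = S := by rw [hS, Matrix.transpose_mul, Matrix.transpose_transpose]
  have hSinvT : S⁻¹ᵀ = S⁻¹ := by rw [Matrix.transpose_nonsing_inv, hST]
  have hOmT : Omᵀ = Om := hOm.1
  have hOminvT : Om⁻¹ᵀ = Om⁻¹ := by rw [Matrix.transpose_nonsing_inv, hOmT]
  have hWT : Wᵀ = W := by
    rw [hW, Matrix.transpose_nonsing_inv, Matrix.transpose_add, Matrix.transpose_one,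
      Matrix.transpose_smul, hSinvT]
  have hAT : Aᵀ = A := by
    rw [hA, Matrix.transpose_nonsing_inv]
    congr 1
    rw [Matrix.transpose_add, hST, Matrix.transpose_smul, Matrix.transpose_mul,
      Matrix.transpose_mul, Matrix.transpose_transpose, hOminvT, Matrix.mul_assoc]
  -- S and W commute
  have hSW : S * W = W * S := by
    have h4 : S * (1 + k • S⁻¹) = (1 + k • S⁻¹) * S := by
      rw [Matrix.mul_add, Matrix.add_mul, Matrix.mul_one, Matrix.one_mul,
        Matrix.mul_smul, Matrix.smul_mul, hSmul, hSmul']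
    calc S * W = (W * (1 + k • S⁻¹)) * (S * W) := by rw [hWmul, Matrix.one_mul]
      _ = W * (((1 + k • S⁻¹) * S) * W) := by simp only [Matrix.mul_assoc]
      _ = W * ((S * (1 + k • S⁻¹)) * W) := by rw [h4]
      _ = (W * S) * ((1 + k • S⁻¹) * W) := by simp only [Matrix.mul_assoc]
      _ = W * S := by rw [hWmul', Matrix.mul_one]
  -- key Woodbury-type identity
  have h1 : (S + v • (Rᵀ * Om⁻¹ * R)) * (S⁻¹ * Rᵀ)
      = (Rᵀ * Om⁻¹) * (Om + v • (R * S⁻¹ * Rᵀ)) := by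
    rw [Matrix.add_mul, Matrix.mul_add, Matrix.smul_mul, Matrix.mul_smul,
      ← Matrix.mul_assoc S S⁻¹ Rᵀ, hSmul, Matrix.one_mul,
      Matrix.mul_assoc Rᵀ Om⁻¹ Om, hOmmul', Matrix.mul_one]
    congr 1
    simp only [Matrix.mul_assoc]
  have key : S⁻¹ * Rᵀ * (Om + v • (R * S⁻¹ * Rᵀ))⁻¹ = A * (Rᵀ * Om⁻¹) := by
    have h2 : S⁻¹ * Rᵀ = A * ((Rᵀ * Om⁻¹) * (Om + v • (R * S⁻¹ * Rᵀ))) := by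
      rw [← h1, ← Matrix.mul_assoc, hAE, Matrix.one_mul]
    rw [h2]
    calc A * (Rᵀ * Om⁻¹ * (Om + v • (R * S⁻¹ * Rᵀ))) * (Om + v • (R * S⁻¹ * Rᵀ))⁻¹
        = A * (Rᵀ * Om⁻¹) * ((Om + v • (R * S⁻¹ * Rᵀ)) * (Om + v • (R * S⁻¹ * Rᵀ))⁻¹) := by
          simp only [Matrix.mul_assoc]
      _ = A * (Rᵀ * Om⁻¹) := by rw [hBmul, Matrix.mul_one]
  -- T*R identity
  have hTR : v • (A * (Rᵀ * Om⁻¹) * R) = 1 - A * S := by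
    have h3 : A * S + v • (A * (Rᵀ * Om⁻¹) * R) = 1 := by
      rw [← hAE, Matrix.mul_add, Matrix.mul_smul]
      congr 2
      simp only [Matrix.mul_assoc]
    exact eq_sub_of_add_eq' h3
  have hSWS : S * (W * S⁻¹) = W := by
    rw [← Matrix.mul_assoc, hSW, Matrix.mul_assoc, hSmul, Matrix.mul_one]
  have hASG : A * S * (W * S⁻¹ * Xᵀ) = A * W * Xᵀ := by
    rw [Matrix.mul_assoc A S, ← Matrix.mul_assoc S (W * S⁻¹) Xᵀ, hSWS, ← Matrix.mul_assoc]
  have hGX : (W * S⁻¹ * Xᵀ) * X = W := by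
    rw [Matrix.mul_assoc (W * S⁻¹) Xᵀ X, ← hS, Matrix.mul_assoc W S⁻¹ S, hSmul', Matrix.mul_one]
  have hβRf : ∀ ω, βR ω = W.mulVec β + (W * S⁻¹ * Xᵀ).mulVec (ε ω) := by
    intro ω
    rw [hβR, hy, Matrix.mulVec_add, Matrix.mulVec_mulVec, hGX]
  have hform : ∀ ω, βSRR ω =
      (β + (A * (W - 1) * S).mulVec β) + (A * W * Xᵀ).mulVec (ε ω)
        + (v • (A * (Rᵀ * Om⁻¹))).mulVec (e ω) := by
    intro ω
    rw [hSRR, hβRf, hr, key]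
    simp only [Matrix.mulVec_add, Matrix.mulVec_sub, Matrix.mulVec_mulVec,
      Matrix.smul_mulVec, smul_add, smul_sub]
    have t1 : v • ((A * (Rᵀ * Om⁻¹) * R) *ᵥ β) = β - (A * S) *ᵥ β := by
      rw [← Matrix.smul_mulVec, hTR, Matrix.sub_mulVec, Matrix.one_mulVec]
    have m2 : v • (A * (Rᵀ * Om⁻¹) * (R * W)) = W - A * (W * S) := by
      rw [show A * (Rᵀ * Om⁻¹) * (R * W) = (A * (Rᵀ * Om⁻¹) * R) * W from by
        simp only [Matrix.mul_assoc], ← Matrix.smul_mul, hTR, Matrix.sub_mul, Matrix.one_mul,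
        Matrix.mul_assoc, hSW]
    have t2 : v • ((A * (Rᵀ * Om⁻¹) * (R * W)) *ᵥ β) = W *ᵥ β - (A * (W * S)) *ᵥ β := by
      rw [← Matrix.smul_mulVec, m2, Matrix.sub_mulVec]
    have m3 : v • (A * (Rᵀ * Om⁻¹) * (R * (W * S⁻¹ * Xᵀ))) = (W * S⁻¹ * Xᵀ) - A * W * Xᵀ := by
      rw [show A * (Rᵀ * Om⁻¹) * (R * (W * S⁻¹ * Xᵀ)) = (A * (Rᵀ * Om⁻¹) * R) * (W * S⁻¹ * Xᵀ)
        from by simp only [Matrix.mul_assoc], ← Matrix.smul_mul, hTR, Matrix.sub_mul,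
        Matrix.one_mul, hASG]
    have t3 : v • ((A * (Rᵀ * Om⁻¹) * (R * (W * S⁻¹ * Xᵀ))) *ᵥ ε ω)
        = (W * S⁻¹ * Xᵀ) *ᵥ ε ω - (A * W * Xᵀ) *ᵥ ε ω := by
      rw [← Matrix.smul_mulVec, m3, Matrix.sub_mulVec]
    have targ : A * (W - 1) * S = A * (W * S) - A * S := by
      rw [Matrix.mul_sub, Matrix.mul_one, Matrix.sub_mul, Matrix.mul_assoc]
    rw [t1, t2, t3, targ, Matrix.sub_mulVec]
    abel
  obtain ⟨hm, hc⟩ := affine_mean_cov μ (A * W * Xᵀ) (v • (A * (Rᵀ * Om⁻¹)))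
    (β + (A * (W - 1) * S).mulVec β) ε e hεint heint hεmean hemean hindep βSRR hform
  refine ⟨hm, ?_⟩
  rw [hc, hεcov, hecov]
  simp only [Matrix.transpose_mul, Matrix.transpose_smul, Matrix.transpose_transpose,
    hWT, hAT, hOminvT, Matrix.smul_mul, Matrix.mul_smul, Matrix.mul_one,
    Matrix.mul_add, Matrix.add_mul, smul_smul, Matrix.mul_assoc]
  rw [show Xᵀ * (X * (W * A)) = S * (W * A) from by rw [← Matrix.mul_assoc, ← hS],
    show Om⁻¹ * (Om * (Om⁻¹ * (R * A))) = Om⁻¹ * (R * A) from by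
      rw [← Matrix.mul_assoc, hOmmul', Matrix.one_mul],
    smul_add, smul_smul, show v * (σ ^ 2 * v) = σ ^ 2 * v ^ 2 from by ring]
end
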